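/- Let a, b, c, d ∈ K and set p := b·t + a·x and q := d·t + c·x in A_1(K). If q·p = p·q + 1 (equivalently, b·c − a·d = 1), then there exists a K-algebra endomorphism α of A_1(K) with α(t) = p and α(x) = q, and every K-algebra endomorphism α of A_1(K) with α(t) = p and α(x) = q is bijective. -/
import Mathlib


/-- The defining relation of the first Weyl algebra `A₁(K)`: `x·t = t·x + 1`, where
`t` is the image of the generator `0` and `x` is the image of the generator `1`. -/
def weylRel (K : Type*) [Field K] :
    FreeAlgebra K (Fin 2) → FreeAlgebra K (Fin 2) → Prop := fun a b =>
  a = FreeAlgebra.ι K (1 : Fin 2) * FreeAlgebra.ι K (0 : Fin 2) ∧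
  b = FreeAlgebra.ι K (0 : Fin 2) * FreeAlgebra.ι K (1 : Fin 2) + 1

/-- The first Weyl algebra `A₁(K)`: the quotient of the free algebra on two generators
`t, x` by the two-sided ideal generated by `x·t − t·x − 1`. -/
abbrev Weyl (K : Type*) [Field K] : Type _ := RingQuot (weylRel K)

/-- The generator `t` of the first Weyl algebra. -/
noncomputable def wT (K : Type*) [Field K] : Weyl K :=
  RingQuot.mkAlgHom K (weylRel K) (FreeAlgebra.ι K (0 : Fin 2))

/-- The generator `x` of the first Weyl algebra. -/
noncomputable def wX (K : Type*) [Field K] : Weyl K :=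
  RingQuot.mkAlgHom K (weylRel K) (FreeAlgebra.ι K (1 : Fin 2))

section aux
variable (K : Type*) [Field K]

lemma wXT : wX K * wT K = wT K * wX K + 1 := by
  have := RingQuot.mkAlgHom_rel K (s := weylRel K)
    (x := FreeAlgebra.ι K (1 : Fin 2) * FreeAlgebra.ι K (0 : Fin 2))
    (y := FreeAlgebra.ι K (0 : Fin 2) * FreeAlgebra.ι K (1 : Fin 2) + 1) ⟨rfl, rfl⟩
  simpa [wT, wX, map_mul, map_add, map_one] using this

lemma weyl_comm (a b c d : K) :
    (d • wT K + c • wX K) * (b • wT K + a • wX K) =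
      (b • wT K + a • wX K) * (d • wT K + c • wX K) + (c * b - a * d) • (1 : Weyl K) := by
  have hx := wXT K
  simp only [add_mul, mul_add, smul_mul_smul_comm, hx, smul_add]
  module

/-- existence of endomorphism sending t ↦ p, x ↦ q when q p = p q + 1. -/
lemma weyl_endo_exists (p q : Weyl K) (h : q * p = p * q + 1) :
    ∃ α : Weyl K →ₐ[K] Weyl K, α (wT K) = p ∧ α (wX K) = q := by
  have w : ∀ ⦃x y⦄, weylRel K x y →
      (FreeAlgebra.lift K ![p, q]) x = (FreeAlgebra.lift K ![p, q]) y := by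
    rintro x y ⟨rfl, rfl⟩
    simp [h]
  refine ⟨RingQuot.liftAlgHom K ⟨FreeAlgebra.lift K ![p, q], w⟩, ?_, ?_⟩ <;>
    simp [wT, wX, RingQuot.liftAlgHom_mkAlgHom_apply]

lemma weyl_hom_ext {S : Type*} [Semiring S] [Algebra K S] (f g : Weyl K →ₐ[K] S)
    (ht : f (wT K) = g (wT K)) (hx : f (wX K) = g (wX K)) : f = g := by
  have key : f.comp (RingQuot.mkAlgHom K (weylRel K)) =
      g.comp (RingQuot.mkAlgHom K (weylRel K)) := by
    apply FreeAlgebra.hom_ext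
    funext i
    fin_cases i
    · simpa [wT] using ht
    · simpa [wX] using hx
  refine AlgHom.ext fun z => ?_
  obtain ⟨y, rfl⟩ := RingQuot.mkAlgHom_surjective K (weylRel K) z
  exact DFunLike.congr_fun key y

end aux

/-- Let `a, b, c, d ∈ K` and set `p := b·t + a·x`, `q := d·t + c·x`
in `A₁(K)`.  If `q·p = p·q + 1`, then there is a `K`-algebra endomorphism `α` of
`A₁(K)` with `α(t) = p` and `α(x) = q`, and every such endomorphism is bijective. -/
theorem weyl_linear_endo_bijective (K : Type*) [Field K] [CharZero K] (a b c d : K)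
    (h : (d • wT K + c • wX K) * (b • wT K + a • wX K) =
      (b • wT K + a • wX K) * (d • wT K + c • wX K) + 1) :
    (∃ α : Weyl K →ₐ[K] Weyl K,
      α (wT K) = b • wT K + a • wX K ∧ α (wX K) = d • wT K + c • wX K) ∧
    (∀ α : Weyl K →ₐ[K] Weyl K,
      α (wT K) = b • wT K + a • wX K → α (wX K) = d • wT K + c • wX K →
      Function.Bijective α) := by
  set p := b • wT K + a • wX K with hp
  set q := d • wT K + c • wX K with hq
  -- from h and weyl_comm: (c*b - a*d) • 1 = 1
  have hone : (c * b - a * d) • (1 : Weyl K) = 1 := by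
    have := (weyl_comm K a b c d).symm.trans h
    exact add_left_cancel this
  -- inverse candidate values
  have hβrel : ((-d) • wT K + b • wX K) * (c • wT K + (-a) • wX K) =
      (c • wT K + (-a) • wX K) * ((-d) • wT K + b • wX K) + 1 := by
    have := weyl_comm K (-a) c b (-d)
    rw [this]
    congr 1
    rw [show b * c - -a * -d = c * b - a * d by ring, hone]
  obtain ⟨β, hβt, hβx⟩ := weyl_endo_exists K _ _ hβrel
  constructor
  · exact weyl_endo_exists K p q h
  · intro α hαt hαx
    -- show β ∘ α = id and α ∘ β = id
    have l1 : ∀ k : K, ∀ z : Weyl K, k • z = (k • (1 : Weyl K)) * z := by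
      intro k z; rw [smul_mul_assoc, one_mul]
    have hct : c • p + (-a) • q = wT K := by
      rw [hp, hq]; rw [smul_add, smul_add, smul_smul, smul_smul, smul_smul, smul_smul]
      have : (c * b) • wT K + (c * a) • wX K + ((-a * d) • wT K + (-a * c) • wX K)
          = (c * b - a * d) • wT K := by module
      rw [this, l1, hone, one_mul]
    have hcx : (-d) • p + b • q = wX K := by
      rw [hp, hq]; rw [smul_add, smul_add, smul_smul, smul_smul, smul_smul, smul_smul]
      have : (-d * b) • wT K + (-d * a) • wX K + ((b * d) • wT K + (b * c) • wX K)
          = (c * b - a * d) • wX K := by module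
      rw [this, l1, hone, one_mul]
    have hba : β.comp α = AlgHom.id K (Weyl K) := by
      apply weyl_hom_ext
      · simp only [AlgHom.comp_apply, AlgHom.id_apply, hαt, hp]
        rw [map_add, map_smul, map_smul, hβt, hβx]
        rw [smul_add, smul_add, smul_smul, smul_smul, smul_smul, smul_smul]
        have : (b * c) • wT K + (b * -a) • wX K + (a * -d) • wT K + (a * b) • wX K
            = (c * b - a * d) • wT K := by module
        rw [← add_assoc, this, l1, hone, one_mul]
      · simp only [AlgHom.comp_apply, AlgHom.id_apply, hαx, hq]
        rw [map_add, map_smul, map_smul, hβt, hβx]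
        rw [smul_add, smul_add, smul_smul, smul_smul, smul_smul, smul_smul]
        have : (d * c) • wT K + (d * -a) • wX K + (c * -d) • wT K + (c * b) • wX K
            = (c * b - a * d) • wX K := by module
        rw [← add_assoc, this, l1, hone, one_mul]
    have hab : α.comp β = AlgHom.id K (Weyl K) := by
      apply weyl_hom_ext
      · simp only [AlgHom.comp_apply, AlgHom.id_apply, hβt]
        rw [map_add, map_smul, map_smul, hαt, hαx]
        exact hct
      · simp only [AlgHom.comp_apply, AlgHom.id_apply, hβx]
        rw [map_add, map_smul, map_smul, hαt, hαx]
        exact hcx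
    have h1 : Function.LeftInverse β α := fun z => congrArg (fun F => F z) hba |>.trans rfl
    have h2 : Function.RightInverse β α := fun z => congrArg (fun F => F z) hab |>.trans rfl
    exact ⟨h1.injective, h2.surjective⟩
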